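/- For every integer m ≥ 2 and every coloring Δ: [1, 5m-4] → {1,2}, there exist monochromatic m-sets X ≺ Y in [1, 5m-4] with 2(x_m - x_1) ≤ y_m - x_1. -/

import Mathlib

/-- `x` is a monochromatic m-set (indexed 1..m) inside `S` under coloring `Δ`. -/
def IsMonoMSet (m : ℕ) (Δ : ℕ → ℕ) (S : Finset ℕ) (x : ℕ → ℕ) : Prop :=
  (∀ i j, 1 ≤ i → i < j → j ≤ m → x i < x j) ∧
  (∀ i, 1 ≤ i → i ≤ m → x i ∈ S) ∧
  (∀ i, 1 ≤ i → i ≤ m → Δ (x i) = Δ (x 1))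

/-- There exist monochromatic m-sets X ≺ Y in `S` with 2(x_m - x_1) ≤ y_m - x_1. -/
def HasGoodPair (m : ℕ) (Δ : ℕ → ℕ) (S : Finset ℕ) : Prop :=
  ∃ x y : ℕ → ℕ, IsMonoMSet m Δ S x ∧ IsMonoMSet m Δ S y ∧
    x m < y 1 ∧ 2 * (x m - x 1) ≤ y m - x 1

/-- `g m r` : least N such that every r-coloring of [1,N] has a good pair. -/
noncomputable def g (m r : ℕ) : ℕ :=
  sInf {N | ∀ Δ : ℕ → ℕ, (∀ z ∈ Finset.Icc 1 N, Δ z ∈ Finset.Icc 1 r) →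
    HasGoodPair m Δ (Finset.Icc 1 N)}

/-- Pigeonhole: an interval set of `2m-1` elements 2-colored has `m` of one color. -/
lemma pigeon_aux (m : ℕ) (hm : 2 ≤ m) (Δ : ℕ → ℕ) (I : Finset ℕ)
    (hI : I.card = 2 * m - 1) (hΔ : ∀ z ∈ I, Δ z = 1 ∨ Δ z = 2) :
    ∃ c, ∃ T ⊆ I, T.card = m ∧ ∀ t ∈ T, Δ t = c := by
  have hsplit := Finset.card_filter_add_card_filter_not
    (s := I) (p := fun z => Δ z = 1)
  by_cases h : m ≤ (I.filter (fun z => Δ z = 1)).card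
  · obtain ⟨T, hT, hTc⟩ := Finset.exists_subset_card_eq h
    exact ⟨1, T, fun t ht => Finset.mem_of_mem_filter t (hT ht), hTc,
      fun t ht => (Finset.mem_filter.mp (hT ht)).2⟩
  · have h2 : m ≤ (I.filter (fun z => ¬ Δ z = 1)).card := by omega
    obtain ⟨T, hT, hTc⟩ := Finset.exists_subset_card_eq h2
    refine ⟨2, T, fun t ht => Finset.mem_of_mem_filter t (hT ht), hTc, fun t ht => ?_⟩
    have h3 := Finset.mem_filter.mp (hT ht)
    rcases hΔ t h3.1 with h4 | h4
    · exact absurd h4 h3.2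
    · exact h4

/-- Build a monochromatic m-set from an m-element monochromatic subset. -/
lemma build_aux (m : ℕ) (hm : 1 ≤ m) (Δ : ℕ → ℕ) (S T : Finset ℕ)
    (hTS : T ⊆ S) (hT : T.card = m) (c : ℕ) (hc : ∀ t ∈ T, Δ t = c) :
    ∃ x : ℕ → ℕ, IsMonoMSet m Δ S x ∧ (∀ i, 1 ≤ i → i ≤ m → x i ∈ T) := by
  set f := T.orderEmbOfFin hT with hf
  refine ⟨fun i => if h : i - 1 < m then f ⟨i - 1, h⟩ else 0, ?_, ?_⟩
  · refine ⟨?_, ?_, ?_⟩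
    · intro i j hi hij hjm
      have h1 : i - 1 < m := by omega
      have h2 : j - 1 < m := by omega
      simp only [dif_pos h1, dif_pos h2]
      exact f.strictMono (by simp [Fin.lt_def]; omega)
    · intro i hi him
      have h1 : i - 1 < m := by omega
      simp only [dif_pos h1]
      exact hTS (Finset.orderEmbOfFin_mem T hT _)
    · intro i hi him
      have h1 : i - 1 < m := by omega
      have h2 : (1 : ℕ) - 1 < m := by omega
      simp only [dif_pos h1, dif_pos h2]
      rw [hc _ (Finset.orderEmbOfFin_mem T hT _), hc _ (Finset.orderEmbOfFin_mem T hT _)]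
  · intro i hi him
    have h1 : i - 1 < m := by omega
    simp only [dif_pos h1]
    exact Finset.orderEmbOfFin_mem T hT _

/-- Gap lemma: a strictly increasing m-set grows at least by 1 each step. -/
lemma gap_aux (m : ℕ) (x : ℕ → ℕ)
    (hx : ∀ i j, 1 ≤ i → i < j → j ≤ m → x i < x j) :
    ∀ j, 1 ≤ j → j ≤ m → x 1 + (j - 1) ≤ x j := by
  intro j
  induction j with
  | zero => omega
  | succ n ih =>
    intro h1 hm
    rcases Nat.eq_or_lt_of_le h1 with h | h
    · obtain rfl : n = 0 := by omega
      simp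
    · have hn : 1 ≤ n := by omega
      have := ih hn (by omega)
      have := hx n (n + 1) hn (by omega) hm
      omega

theorem stmt6 (m : ℕ) (hm : 2 ≤ m) (Δ : ℕ → ℕ)
    (hΔ : ∀ z ∈ Finset.Icc 1 (5 * m - 4), Δ z ∈ Finset.Icc 1 2) :
    HasGoodPair m Δ (Finset.Icc 1 (5 * m - 4)) := by
  have hΔ' : ∀ z ∈ Finset.Icc 1 (5 * m - 4), Δ z = 1 ∨ Δ z = 2 := by
    intro z hz
    have := hΔ z hz
    simp only [Finset.mem_Icc] at this
    omega
  -- first interval [1, 2m-1]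
  have hsub1 : Finset.Icc 1 (2 * m - 1) ⊆ Finset.Icc 1 (5 * m - 4) := by
    apply Finset.Icc_subset_Icc le_rfl; omega
  have hcard1 : (Finset.Icc 1 (2 * m - 1)).card = 2 * m - 1 := by
    rw [Nat.card_Icc]; omega
  obtain ⟨c1, T1, hT1I, hT1c, hT1mono⟩ := pigeon_aux m hm Δ _ hcard1
    (fun z hz => hΔ' z (hsub1 hz))
  -- second interval [3m-2, 5m-4]
  have hsub2 : Finset.Icc (3 * m - 2) (5 * m - 4) ⊆ Finset.Icc 1 (5 * m - 4) := by
    apply Finset.Icc_subset_Icc (by omega) le_rfl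
  have hcard2 : (Finset.Icc (3 * m - 2) (5 * m - 4)).card = 2 * m - 1 := by
    rw [Nat.card_Icc]; omega
  obtain ⟨c2, T2, hT2I, hT2c, hT2mono⟩ := pigeon_aux m hm Δ _ hcard2
    (fun z hz => hΔ' z (hsub2 hz))
  obtain ⟨x, hx, hxT⟩ := build_aux m (by omega) Δ _ T1
    (fun t ht => hsub1 (hT1I ht)) hT1c c1 hT1mono
  obtain ⟨y, hy, hyT⟩ := build_aux m (by omega) Δ _ T2
    (fun t ht => hsub2 (hT2I ht)) hT2c c2 hT2mono
  refine ⟨x, y, hx, hy, ?_, ?_⟩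
  · have h1 : x m ∈ Finset.Icc 1 (2 * m - 1) := hT1I (hxT m (by omega) le_rfl)
    have h2 : y 1 ∈ Finset.Icc (3 * m - 2) (5 * m - 4) := hT2I (hyT 1 le_rfl (by omega))
    simp only [Finset.mem_Icc] at h1 h2
    omega
  · have h1 : x 1 ∈ Finset.Icc 1 (2 * m - 1) := hT1I (hxT 1 le_rfl (by omega))
    have h2 : x m ∈ Finset.Icc 1 (2 * m - 1) := hT1I (hxT m (by omega) le_rfl)
    have h3 : y 1 ∈ Finset.Icc (3 * m - 2) (5 * m - 4) := hT2I (hyT 1 le_rfl (by omega))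
    have h4 : y 1 + (m - 1) ≤ y m := gap_aux m y hy.1 m (by omega) le_rfl
    have h5 : x 1 ≤ x m := le_of_lt (hx.1 1 m le_rfl (by omega) le_rfl)
    simp only [Finset.mem_Icc] at h1 h2 h3
    omega
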